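/- For the Petri net with places p1, p2, p3, transitions t1 (consumes 1 from p1, produces 1 in p2), t2 (consumes 1 from p2, produces 2 in p3), t3 (consumes 1 from p3, produces 2 in p2), and initial marking (1,0,0): the marking (1,1,1) is limit-reachable under the continuous semantics (i.e., (1,0,0) ⇝^∞ (1,1,1)) but not continuously reachable ((1,0,0) ⇝* (1,1,1) does not hold). -/

import Mathlib

open Classical

/-- One step of transition `t`: `F p t` tokens consumed from `p`, `G t p` produced. -/
def Step {P T : Type*} (F : P → T → ℕ) (G : T → P → ℕ) (t : T) (m m' : P → ℕ) : Prop :=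
  ∀ p, F p t ≤ m p ∧ m' p = m p - F p t + G t p

/-- One-step relation (union over transitions). -/
def Step1 {P T : Type*} (F : P → T → ℕ) (G : T → P → ℕ) (m m' : P → ℕ) : Prop :=
  ∃ t, Step F G t m m'

/-- Many-step reachability. -/
def Reach {P T : Type*} (F : P → T → ℕ) (G : T → P → ℕ) : (P → ℕ) → (P → ℕ) → Prop :=
  Relation.ReflTransGen (Step1 F G)

/-- Upward closure. -/
def up {P : Type*} (S : Set (P → ℕ)) : Set (P → ℕ) := {u | ∃ m ∈ S, m ≤ u}

/-- Downward closure. -/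
def down {P : Type*} (S : Set (P → ℕ)) : Set (P → ℕ) := {d | ∃ m ∈ S, d ≤ m}

def UpwardClosed {P : Type*} (S : Set (P → ℕ)) : Prop := ∀ ⦃m m' : P → ℕ⦄, m ∈ S → m ≤ m' → m' ∈ S

def DownwardClosed {P : Type*} (S : Set (P → ℕ)) : Prop := ∀ ⦃m m' : P → ℕ⦄, m ∈ S → m' ≤ m → m' ∈ S

/-- One-step predecessors of `S`. -/
def pre {P T : Type*} (F : P → T → ℕ) (G : T → P → ℕ) (S : Set (P → ℕ)) : Set (P → ℕ) :=
  {m | ∃ m' ∈ S, Step1 F G m m'}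

/-- Predecessors via transition `t`. -/
def preT {P T : Type*} (F : P → T → ℕ) (G : T → P → ℕ) (t : T) (S : Set (P → ℕ)) : Set (P → ℕ) :=
  {m | ∃ m' ∈ S, Step F G t m m'}

/-- Many-step predecessors of `S`. -/
def preStar {P T : Type*} (F : P → T → ℕ) (G : T → P → ℕ) (S : Set (P → ℕ)) : Set (P → ℕ) :=
  {m | ∃ m' ∈ S, Reach F G m m'}

/-- The coverability set. -/
def Cov {P T : Type*} (F : P → T → ℕ) (G : T → P → ℕ) (minit : P → ℕ) : Set (P → ℕ) :=
  down {m | Reach F G minit m}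

/-- Pruned backward iteration sequence. -/
noncomputable def Useq {P T : Type*} (F : P → T → ℕ) (G : T → P → ℕ)
    (I : Set (P → ℕ)) (mfin : P → ℕ) : ℕ → Set (P → ℕ)
  | 0 => if mfin ∈ I then up {mfin} else ∅
  | k + 1 => up (pre F G (Useq F G I mfin k) ∩ I) ∪ Useq F G I mfin k

def CStep {P T : Type*} (F : P → T → ℕ) (G : T → P → ℕ) (r : ℚ) (t : T)
    (m m' : P → ℚ) : Prop :=
  0 ≤ r ∧ ∀ p, r * (F p t : ℚ) ≤ m p ∧ m' p = m p - r * (F p t : ℚ) + r * (G t p : ℚ)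

def CStep1 {P T : Type*} (F : P → T → ℕ) (G : T → P → ℕ) (m m' : P → ℚ) : Prop :=
  ∃ r t, CStep F G r t m m'

def CReach {P T : Type*} (F : P → T → ℕ) (G : T → P → ℕ) : (P → ℚ) → (P → ℚ) → Prop :=
  Relation.ReflTransGen (CStep1 F G)

/-- Limit-reachability: `m'` is the coordinatewise limit of continuously reachable markings. -/
def CLimReach {P T : Type*} (F : P → T → ℕ) (G : T → P → ℕ) (m m' : P → ℚ) : Prop :=
  ∃ seq : ℕ → (P → ℚ), (∀ k, CReach F G m (seq k)) ∧
    ∀ p, Filter.Tendsto (fun k => seq k p) Filter.atTop (nhds (m' p))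

/-- `Fex p t` = tokens consumed from place `p` by transition `t`. -/
def Fex : Fin 3 → Fin 3 → ℕ := ![![1, 0, 0], ![0, 1, 0], ![0, 0, 1]]

/-- `Gex t p` = tokens produced in place `p` by transition `t`. -/
def Gex : Fin 3 → Fin 3 → ℕ := ![![0, 1, 0], ![0, 0, 2], ![0, 2, 0]]

lemma step_t1 (a b c r : ℚ) (h0 : 0 ≤ r) (hb : 0 ≤ b) (hc : 0 ≤ c) (h : r ≤ a) :
    CStep1 Fex Gex ![a, b, c] ![a - r, b + r, c] := by
  refine ⟨r, 0, h0, ?_⟩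
  intro p
  fin_cases p <;>
    simp [Fex, Gex, Matrix.vecHead, Matrix.vecTail] <;>
    (try constructor) <;> linarith

lemma step_t2 (a b c r : ℚ) (h0 : 0 ≤ r) (ha : 0 ≤ a) (hc : 0 ≤ c) (h : r ≤ b) :
    CStep1 Fex Gex ![a, b, c] ![a, b - r, c + 2 * r] := by
  refine ⟨r, 1, h0, ?_⟩
  intro p
  fin_cases p <;>
    simp [Fex, Gex, Matrix.vecHead, Matrix.vecTail] <;>
    (try constructor) <;> linarith

lemma step_t3 (a b c r : ℚ) (h0 : 0 ≤ r) (ha : 0 ≤ a) (hb : 0 ≤ b) (h : r ≤ c) :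
    CStep1 Fex Gex ![a, b, c] ![a, b + 2 * r, c - r] := by
  refine ⟨r, 2, h0, ?_⟩
  intro p
  fin_cases p <;>
    simp [Fex, Gex, Matrix.vecHead, Matrix.vecTail] <;>
    (try constructor) <;> linarith

lemma grow (a s : ℚ) (ha : 0 ≤ a) (hs : 0 ≤ s) :
    ∀ n : ℕ, CReach Fex Gex ![a, s, 0] ![a, 4 ^ n * s, 0] := by
  intro n
  induction n with
  | zero => rw [pow_zero, one_mul]; exact Relation.ReflTransGen.refl
  | succ n ih =>
    refine ih.trans ?_
    have h1 : CStep1 Fex Gex ![a, 4 ^ n * s, 0] ![a, 0, 2 * (4 ^ n * s)] := by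
      have := step_t2 a (4 ^ n * s) 0 (4 ^ n * s) (by positivity) ha le_rfl le_rfl
      simpa using this
    have h2 : CStep1 Fex Gex ![a, 0, 2 * (4 ^ n * s)]
        ![a, 4 ^ (n + 1) * s, 0] := by
      have := step_t3 a 0 (2 * (4 ^ n * s)) (2 * (4 ^ n * s)) (by positivity) ha le_rfl le_rfl
      have e1 : (0 : ℚ) + 2 * (2 * (4 ^ n * s)) = 4 ^ (n + 1) * s := by ring
      have e2 : 2 * (4 ^ n * s) - 2 * (4 ^ n * s) = (0 : ℚ) := by ring
      rw [e1, e2] at this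
      exact this
    exact (Relation.ReflTransGen.single h1).trans (Relation.ReflTransGen.single h2)

lemma reach_seq (n : ℕ) :
    CReach Fex Gex ![1, 0, 0] ![1 - (3/2) / 4 ^ (n + 1), 1, 1] := by
  set ε : ℚ := (3/2) / 4 ^ (n + 1) with hε
  have hε0 : 0 ≤ ε := by positivity
  have hε1 : ε ≤ 1 := by
    rw [hε, div_le_one (by positivity)]
    calc (3/2 : ℚ) ≤ 4 := by norm_num
    _ ≤ 4 ^ (n + 1) := le_self_pow₀ (by norm_num) (Nat.succ_ne_zero n)
  have s1 : CStep1 Fex Gex ![1, 0, 0] ![1 - ε, ε, 0] := by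
    have := step_t1 1 0 0 ε hε0 le_rfl le_rfl hε1
    simpa using this
  have s2 : CReach Fex Gex ![1 - ε, ε, 0] ![1 - ε, 3/2, 0] := by
    have := grow (1 - ε) ε (by linarith) hε0 (n + 1)
    have e : (4 : ℚ) ^ (n + 1) * ε = 3/2 := by
      rw [hε]; field_simp
    rwa [e] at this
  have s3 : CStep1 Fex Gex ![1 - ε, 3/2, 0] ![1 - ε, 1, 1] := by
    have := step_t2 (1 - ε) (3/2) 0 (1/2) (by norm_num) (by linarith) le_rfl (by norm_num)
    norm_num at this
    exact this
  exact ((Relation.ReflTransGen.single s1).trans s2).trans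
    (Relation.ReflTransGen.single s3)

def InvMark (m : Fin 3 → ℚ) : Prop := m 0 ≤ 1 ∧ (m 0 = 1 → m 1 = 0 ∧ m 2 = 0)

lemma inv_step {m m' : Fin 3 → ℚ} (hm : InvMark m) (h : CStep1 Fex Gex m m') : InvMark m' := by
  obtain ⟨r, t, hr, hstep⟩ := h
  obtain ⟨h1, h2⟩ := hm
  have H0 := hstep 0
  have H1 := hstep 1
  have H2 := hstep 2
  fin_cases t <;> simp [Fex, Gex, Matrix.vecHead, Matrix.vecTail] at H0 H1 H2
  · -- t1: m'0 = m0 - r, m'1 = m1 + r, m'2 = m2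
    constructor
    · linarith [H0.1, H0.2]
    · intro h10
      have hr0 : r = 0 := by linarith [H0.2]
      have hm0 : m 0 = 1 := by linarith [H0.2]
      obtain ⟨e1, e2⟩ := h2 hm0
      exact ⟨by linarith [H1.2], by linarith [H2.2]⟩
  · -- t2: r ≤ m1, m'0 = m0, m'1 = m1 - r, m'2 = m2 + 2r
    constructor
    · linarith [H0.2]
    · intro h10
      have hm0 : m 0 = 1 := by linarith [H0.2]
      obtain ⟨e1, e2⟩ := h2 hm0
      have hr0 : r = 0 := le_antisymm (by linarith [H1.1]) hr
      exact ⟨by linarith [H1.2], by linarith [H2.2]⟩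
  · -- t3: r ≤ m2
    constructor
    · linarith [H0.2]
    · intro h10
      have hm0 : m 0 = 1 := by linarith [H0.2]
      obtain ⟨e1, e2⟩ := h2 hm0
      have hr0 : r = 0 := le_antisymm (by linarith [H2.1]) hr
      exact ⟨by linarith [H1.2], by linarith [H2.2]⟩

lemma inv_reach {m m' : Fin 3 → ℚ} (h : CReach Fex Gex m m') (hm : InvMark m) :
    InvMark m' := by
  induction h with
  | refl => exact hm
  | tail _ hstep ih => exact inv_step ih hstep

theorem stmt15 :
    CLimReach Fex Gex ![1, 0, 0] ![1, 1, 1] ∧ ¬ CReach Fex Gex ![1, 0, 0] ![1, 1, 1] := by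
  constructor
  · refine ⟨fun n => ![1 - (3/2) / 4 ^ (n + 1), 1, 1], fun n => reach_seq n, ?_⟩
    intro p
    fin_cases p <;> simp
    · have h4 : Filter.Tendsto (fun n : ℕ => ((1:ℚ)/4) ^ n) Filter.atTop (nhds 0) :=
        tendsto_pow_atTop_nhds_zero_of_lt_one (by norm_num) (by norm_num)
      have : Filter.Tendsto (fun n : ℕ => 1 - (3/2) / 4 ^ (n + 1) : ℕ → ℚ)
          Filter.atTop (nhds (1 - (3/2) * 0)) := by
        have h5 : Filter.Tendsto (fun n : ℕ => ((1:ℚ)/4) ^ (n + 1)) Filter.atTop (nhds 0) :=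
          h4.comp (Filter.tendsto_add_atTop_nat 1)
        have := Filter.Tendsto.const_sub (1:ℚ) (h5.const_mul (3/2))
        simp only [mul_zero] at this ⊢
        convert this using 2 with n
        rw [div_eq_mul_inv, ← one_div, div_pow]
        ring_nf
      simpa using this
  · intro h
    have hinv : InvMark ![1, 1, 1] := inv_reach h (by constructor <;> simp)
    simp [InvMark] at hinv
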